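/- Let λ > 0 and a > 2, and let p_λ be the SCAD penalty. Then the function x ↦ p_λ(|x|) + x²/(2(a−1)) is convex on ℝ. -/

import Mathlib

/-- The SCAD penalty with regularization parameter `lam` and non-convexity parameter `a`. -/
noncomputable def scad (lam a t : ℝ) : ℝ :=
  if t ≤ lam then lam * t
  else if t ≤ a * lam then -(t ^ 2 - 2 * a * lam * t + lam ^ 2) / (2 * (a - 1))
  else (a + 1) * lam ^ 2 / 2

namespace ScadAux

/-- The (doubled) Huber function. -/
noncomputable def hub (lam x : ℝ) : ℝ := x ^ 2 - max (|x| - lam) 0 ^ 2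

/-- Supporting bound for the Huber function. -/
lemma hub_lower {lam : ℝ} (hlam : 0 < lam) {u : ℝ} (hu : |u| ≤ lam) (x : ℝ) :
    2 * u * x - u ^ 2 ≤ hub lam x := by
  have hu1 : u ≤ lam := (le_abs_self u).trans hu
  have hu2 : -lam ≤ u := (neg_le_neg hu).trans (neg_abs_le u)
  rcases le_or_gt |x| lam with h | h
  · rw [hub, max_eq_right (by linarith)]
    nlinarith [sq_nonneg (x - u)]
  · rw [hub, max_eq_left (by linarith)]
    have hx1 : x ≤ |x| := le_abs_self x
    have hx2 : -|x| ≤ x := neg_abs_le x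
    have hux : u * x ≤ |u| * |x| := by
      calc u * x ≤ |u * x| := le_abs_self _
        _ = |u| * |x| := abs_mul u x
    have h1 : 0 ≤ lam - |u| := by linarith
    have h2 : 0 ≤ 2 * |x| - lam - |u| := by
      have := (le_abs_self u).trans hu
      nlinarith [abs_nonneg u]
    nlinarith [mul_nonneg h1 h2, sq_abs x, sq_abs u]

lemma hub_convex {lam : ℝ} (hlam : 0 < lam) : ConvexOn ℝ Set.univ (hub lam) := by
  refine ⟨convex_univ, fun x _ y _ s t hs ht hst => ?_⟩
  simp only [smul_eq_mul]
  set z := s * x + t * y with hz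
  rcases le_or_gt |z| lam with h | h
  · have hzv : hub lam z = z ^ 2 := by
      rw [hub, max_eq_right (by linarith)]; ring
    have b1 := hub_lower hlam h x
    have b2 := hub_lower hlam h y
    have e : s * (2 * z * x - z ^ 2) + t * (2 * z * y - z ^ 2) = z ^ 2 := by
      linear_combination (-2 * z) * hz + (-z ^ 2) * hst
    rw [hzv]
    have B1 := mul_le_mul_of_nonneg_left b1 hs
    have B2 := mul_le_mul_of_nonneg_left b2 ht
    linarith
  · have hzv : hub lam z = 2 * lam * |z| - lam ^ 2 := by
      rw [hub, max_eq_left (by linarith)]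
      nlinarith [sq_abs z]
    set u : ℝ := if 0 ≤ z then lam else -lam with hu
    have huabs : |u| ≤ lam := by
      rcases le_or_gt 0 z with hz0 | hz0
      · rw [hu, if_pos hz0, abs_of_pos hlam]
      · rw [hu, if_neg (not_le.2 hz0), abs_neg, abs_of_pos hlam]
    have huz : u * z = lam * |z| := by
      rcases le_or_gt 0 z with hz0 | hz0
      · rw [hu, if_pos hz0, abs_of_nonneg hz0]
      · rw [hu, if_neg (not_le.2 hz0), abs_of_neg hz0]; ring
    have hu2 : u ^ 2 = lam ^ 2 := by
      rcases le_or_gt 0 z with hz0 | hz0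
      · rw [hu, if_pos hz0]
      · rw [hu, if_neg (not_le.2 hz0)]; ring
    have b1 := hub_lower hlam huabs x
    have b2 := hub_lower hlam huabs y
    have e : s * (2 * u * x - u ^ 2) + t * (2 * u * y - u ^ 2) = 2 * (u * z) - u ^ 2 := by
      linear_combination (-2 * u) * hz + (-(u ^ 2)) * hst
    rw [hzv]
    have B1 := mul_le_mul_of_nonneg_left b1 hs
    have B2 := mul_le_mul_of_nonneg_left b2 ht
    have e2 : 2 * (u * z) - u ^ 2 = 2 * lam * |z| - lam ^ 2 := by rw [huz, hu2]; ring
    linarith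

/-- The squared hinge at level `c`. -/
noncomputable def hinge (c x : ℝ) : ℝ := max (|x| - c) 0 ^ 2

lemma hinge_convex (c : ℝ) : ConvexOn ℝ Set.univ (hinge c) := by
  refine ⟨convex_univ, fun x _ y _ s t hs ht hst => ?_⟩
  simp only [smul_eq_mul]
  set ux := max (|x| - c) 0 with hux
  set uy := max (|y| - c) 0 with huy
  have hux0 : 0 ≤ ux := le_max_right _ _
  have huy0 : 0 ≤ uy := le_max_right _ _
  have hux1 : |x| - c ≤ ux := le_max_left _ _
  have huy1 : |y| - c ≤ uy := le_max_left _ _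
  have habs : |s * x + t * y| ≤ s * |x| + t * |y| := by
    calc |s * x + t * y| ≤ |s * x| + |t * y| := abs_add_le _ _
      _ = s * |x| + t * |y| := by
          rw [abs_mul, abs_mul, abs_of_nonneg hs, abs_of_nonneg ht]
  have hc : s * c + t * c = c := by rw [← add_mul, hst, one_mul]
  have hm : max (|s * x + t * y| - c) 0 ≤ s * ux + t * uy := by
    apply max_le
    · have A := mul_le_mul_of_nonneg_left hux1 hs
      have B := mul_le_mul_of_nonneg_left huy1 ht
      nlinarith [A, B, habs, hc]
    · positivity
  have hm0 : 0 ≤ max (|s * x + t * y| - c) 0 := le_max_right _ _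
  have h1 : max (|s * x + t * y| - c) 0 ^ 2 ≤ (s * ux + t * uy) ^ 2 := by
    nlinarith
  have h2 : (s * ux + t * uy) ^ 2 ≤ s * ux ^ 2 + t * uy ^ 2 := by
    nlinarith [sq_nonneg (ux - uy), mul_nonneg hs ht]
  simp only [hinge]
  nlinarith

lemma abs_convex (lam : ℝ) (hlam : 0 ≤ lam) :
    ConvexOn ℝ Set.univ (fun x : ℝ => lam * |x|) := by
  refine ⟨convex_univ, fun x _ y _ s t hs ht hst => ?_⟩
  simp only [smul_eq_mul]
  have habs : |s * x + t * y| ≤ s * |x| + t * |y| := by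
    calc |s * x + t * y| ≤ |s * x| + |t * y| := abs_add_le _ _
      _ = s * |x| + t * |y| := by
          rw [abs_mul, abs_mul, abs_of_nonneg hs, abs_of_nonneg ht]
  nlinarith [abs_nonneg (s * x + t * y)]

end ScadAux

/-- Weak convexity of SCAD: `x ↦ p_λ(|x|) + x²/(2(a−1))` is convex on ℝ. -/
theorem scad_weak_convexity (lam a : ℝ) (hlam : 0 < lam) (ha : 2 < a) :
    ConvexOn ℝ Set.univ (fun x : ℝ => scad lam a |x| + x ^ 2 / (2 * (a - 1))) := by
  have ha1 : (0:ℝ) < a - 1 := by linarith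
  have hne : (2 * (a - 1)) ≠ 0 := by positivity
  have key : ∀ x : ℝ, scad lam a |x| + x ^ 2 / (2 * (a - 1))
      = lam * |x| + (1 / (2 * (a - 1))) * (ScadAux.hub lam x + ScadAux.hinge (a * lam) x) := by
    intro x
    have hx0 : 0 ≤ |x| := abs_nonneg x
    have hsq : |x| ^ 2 = x ^ 2 := sq_abs x
    rcases le_or_gt |x| lam with h1 | h1
    · have h2 : |x| ≤ a * lam := by nlinarith
      rw [scad, if_pos h1, ScadAux.hub, ScadAux.hinge,
        max_eq_right (by linarith : |x| - lam ≤ 0),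
        max_eq_right (by linarith : |x| - a * lam ≤ 0)]
      field_simp
      ring
    · rcases le_or_gt |x| (a * lam) with h2 | h2
      · rw [scad, if_neg (not_le.2 h1), if_pos h2, ScadAux.hub, ScadAux.hinge,
          max_eq_left (by linarith : 0 ≤ |x| - lam),
          max_eq_right (by linarith : |x| - a * lam ≤ 0)]
        field_simp
        nlinarith [hsq]
      · rw [scad, if_neg (not_le.2 h1), if_neg (not_le.2 h2), ScadAux.hub, ScadAux.hinge,
          max_eq_left (by linarith : 0 ≤ |x| - lam),
          max_eq_left (by linarith : 0 ≤ |x| - a * lam)]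
        field_simp
        nlinarith [hsq]
  have hfun : (fun x : ℝ => scad lam a |x| + x ^ 2 / (2 * (a - 1)))
      = fun x : ℝ => lam * |x|
          + (1 / (2 * (a - 1))) * (ScadAux.hub lam x + ScadAux.hinge (a * lam) x) :=
    funext key
  rw [hfun]
  have hsum : ConvexOn ℝ Set.univ
      (fun x : ℝ => ScadAux.hub lam x + ScadAux.hinge (a * lam) x) :=
    (ScadAux.hub_convex hlam).add (ScadAux.hinge_convex (a * lam))
  have hsmul := hsum.smul (c := 1 / (2 * (a - 1))) (by positivity)
  exact (ScadAux.abs_convex lam hlam.le).add hsmul
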